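/- Let k ≥ 2 be an integer, σ > 0, b ≥ 0, D_k > 0, and C_k' > 0 be reals. For each i = 1, …, k−1, let T_i > 0 and C_i > 0 be the period and execution time of a higher-priority task with T_i < D_k, and set U_i = C_i/T_i, g_i = ⌈D_k/T_i⌉ − 1 (an integer ≥ 1), and t_i = g_i·T_i. Also set t_k = D_k. Assume the tasks are indexed so that t_1 ≤ t_2 ≤ ⋯ ≤ t_{k−1}. Define α_i = σ·(g_i + b)/g_i and β_i = σ/g_i for i = 1, …, k−1. Then (1) for every i, 0 < α_i ≤ σ·(1+b) and 0 < β_i ≤ σ; and (2) for every j ∈ {1, …, k}, C_k' + Σ_{i=1}^{k−1} σ·(⌈t_j/T_i⌉·C_i + b·C_i) ≤ C_k' + Σ_{i=1}^{k−1} α_i·t_i·U_i + Σ_{i=1}^{j−1} β_i·t_i·U_i. Consequently, if there exists j ∈ {1, …, k} with C_k' + Σ_{i=1}^{k−1} α_i·t_i·U_i + Σ_{i=1}^{j−1} β_i·t_i·U_i ≤ t_j, then there exists t with 0 < t ≤ D_k and C_k' + Σ_{i=1}^{k−1} σ·(⌈t/T_i⌉·C_i + b·C_i) ≤ t. -/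

import Mathlib

open Finset

theorem constant_inflation_k2u_parameters
    (k : ℕ) (hk : 2 ≤ k) (σ b Dk Ck' : ℝ)
    (hσ : 0 < σ) (hb : 0 ≤ b) (hDk : 0 < Dk) (hCk' : 0 < Ck')
    (T C : ℕ → ℝ)
    (hT : ∀ i ∈ Finset.Icc 1 (k - 1), 0 < T i)
    (hC : ∀ i ∈ Finset.Icc 1 (k - 1), 0 < C i)
    (hTD : ∀ i ∈ Finset.Icc 1 (k - 1), T i < Dk)
    (U : ℕ → ℝ) (hU : ∀ i ∈ Finset.Icc 1 (k - 1), U i = C i / T i)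
    (g : ℕ → ℤ) (hg : ∀ i ∈ Finset.Icc 1 (k - 1), g i = ⌈Dk / T i⌉ - 1)
    (t : ℕ → ℝ) (ht : ∀ i ∈ Finset.Icc 1 (k - 1), t i = (g i : ℝ) * T i)
    (htk : t k = Dk)
    (hmono : ∀ i ∈ Finset.Icc 1 (k - 1), ∀ j ∈ Finset.Icc 1 (k - 1), i ≤ j → t i ≤ t j)
    (A B : ℕ → ℝ)
    (hA : ∀ i ∈ Finset.Icc 1 (k - 1), A i = σ * ((g i : ℝ) + b) / (g i : ℝ))
    (hB : ∀ i ∈ Finset.Icc 1 (k - 1), B i = σ / (g i : ℝ)) :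
    (∀ i ∈ Finset.Icc 1 (k - 1), 1 ≤ g i) ∧
    (∀ i ∈ Finset.Icc 1 (k - 1),
      (0 < A i ∧ A i ≤ σ * (1 + b)) ∧ (0 < B i ∧ B i ≤ σ)) ∧
    (∀ j ∈ Finset.Icc 1 k,
      Ck' + ∑ i ∈ Finset.Icc 1 (k - 1), σ * ((⌈t j / T i⌉ : ℝ) * C i + b * C i)
        ≤ Ck' + (∑ i ∈ Finset.Icc 1 (k - 1), A i * t i * U i)
            + (∑ i ∈ Finset.Icc 1 (j - 1), B i * t i * U i)) ∧
    ((∃ j ∈ Finset.Icc 1 k,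
        Ck' + (∑ i ∈ Finset.Icc 1 (k - 1), A i * t i * U i)
          + (∑ i ∈ Finset.Icc 1 (j - 1), B i * t i * U i) ≤ t j) →
      ∃ t' : ℝ, 0 < t' ∧ t' ≤ Dk ∧
        Ck' + ∑ i ∈ Finset.Icc 1 (k - 1), σ * ((⌈t' / T i⌉ : ℝ) * C i + b * C i) ≤ t') := by
  have hg1 : ∀ i ∈ Finset.Icc 1 (k - 1), 1 ≤ g i := by
    intro i hi
    have hTi := hT i hi
    have h1 : (1:ℝ) < Dk / T i := (one_lt_div hTi).mpr (hTD i hi)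
    have h2 : (1:ℤ) < ⌈Dk / T i⌉ := by
      rw [Int.lt_ceil]; exact_mod_cast h1
    rw [hg i hi]; omega
  have hgR : ∀ i ∈ Finset.Icc 1 (k - 1), (1:ℝ) ≤ (g i : ℝ) := by
    intro i hi; exact_mod_cast hg1 i hi
  have hgpos : ∀ i ∈ Finset.Icc 1 (k - 1), (0:ℝ) < (g i : ℝ) := by
    intro i hi; linarith [hgR i hi]
  -- part 1/2: A and B bounds
  have hAB : ∀ i ∈ Finset.Icc 1 (k - 1),
      (0 < A i ∧ A i ≤ σ * (1 + b)) ∧ (0 < B i ∧ B i ≤ σ) := by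
    intro i hi
    have hgp := hgpos i hi
    have hg1' := hgR i hi
    constructor
    · constructor
      · rw [hA i hi]
        apply div_pos _ hgp
        nlinarith
      · rw [hA i hi, div_le_iff₀ hgp]
        nlinarith [mul_nonneg (mul_nonneg hσ.le hb) (sub_nonneg.mpr hg1')]
    · constructor
      · rw [hB i hi]; exact div_pos hσ hgp
      · rw [hB i hi]
        rw [div_le_iff₀ hgp]
        nlinarith
  -- t positivity and bound
  have htpos' : ∀ i ∈ Finset.Icc 1 (k - 1), 0 < t i := by
    intro i hi
    rw [ht i hi]
    exact mul_pos (hgpos i hi) (hT i hi)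
  have htlt : ∀ i ∈ Finset.Icc 1 (k - 1), t i < Dk := by
    intro i hi
    have hTi := hT i hi
    rw [ht i hi, hg i hi]
    have := Int.ceil_lt_add_one (Dk / T i)
    have h3 : ((⌈Dk / T i⌉ : ℝ) - 1) < Dk / T i := by push_cast at this ⊢; linarith
    calc ((⌈Dk / T i⌉ - 1 : ℤ) : ℝ) * T i < (Dk / T i) * T i := by
            apply mul_lt_mul_of_pos_right _ hTi
            push_cast; linarith
      _ = Dk := by field_simp
  have hjcase : ∀ j ∈ Finset.Icc 1 k, j = k ∨ j ∈ Finset.Icc 1 (k - 1) := by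
    intro j hj
    simp only [Finset.mem_Icc] at hj ⊢
    omega
  have htjpos : ∀ j ∈ Finset.Icc 1 k, 0 < t j := by
    intro j hj
    rcases hjcase j hj with h | h
    · rw [h, htk]; exact hDk
    · exact htpos' j h
  have htjle : ∀ j ∈ Finset.Icc 1 k, t j ≤ Dk := by
    intro j hj
    rcases hjcase j hj with h | h
    · rw [h, htk]
    · exact (htlt j h).le
  -- ceiling bound
  have hceil : ∀ j ∈ Finset.Icc 1 k, ∀ i ∈ Finset.Icc 1 (k - 1),
      (⌈t j / T i⌉ : ℝ) ≤ (g i : ℝ) + (if i < j then 1 else 0) := by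
    intro j hj i hi
    have hTi := hT i hi
    by_cases hij : i < j
    · simp only [hij, if_pos]
      have h1 : ⌈t j / T i⌉ ≤ ⌈Dk / T i⌉ := by
        apply Int.ceil_le_ceil
        gcongr
        exact htjle j hj
      have : (⌈t j / T i⌉ : ℝ) ≤ (⌈Dk / T i⌉ : ℝ) := by exact_mod_cast h1
      rw [hg i hi]
      push_cast
      linarith
    · simp only [hij, if_neg, not_false_iff, add_zero]
      push_neg at hij
      have hji : j ∈ Finset.Icc 1 (k - 1) := by
        simp only [Finset.mem_Icc] at hj hi ⊢; omega
      have h1 : t j ≤ t i := hmono j hji i hi hij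
      have h2 : t j / T i ≤ (g i : ℝ) := by
        rw [div_le_iff₀ hTi]
        rw [← ht i hi]; exact h1
      have h3 : ⌈t j / T i⌉ ≤ g i := Int.ceil_le.mpr h2
      exact_mod_cast h3
  -- main inequality (part 3)
  have hmain : ∀ j ∈ Finset.Icc 1 k,
      Ck' + ∑ i ∈ Finset.Icc 1 (k - 1), σ * ((⌈t j / T i⌉ : ℝ) * C i + b * C i)
        ≤ Ck' + (∑ i ∈ Finset.Icc 1 (k - 1), A i * t i * U i)
            + (∑ i ∈ Finset.Icc 1 (j - 1), B i * t i * U i) := by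
    intro j hj
    have hjk : j ≤ k := (Finset.mem_Icc.mp hj).2
    have hj1 : 1 ≤ j := (Finset.mem_Icc.mp hj).1
    have hsub : Finset.Icc 1 (j - 1) ⊆ Finset.Icc 1 (k - 1) :=
      Finset.Icc_subset_Icc le_rfl (by omega)
    have hrw : (∑ i ∈ Finset.Icc 1 (j - 1), B i * t i * U i)
        = ∑ i ∈ Finset.Icc 1 (k - 1),
            (if i ∈ Finset.Icc 1 (j - 1) then B i * t i * U i else 0) := by
      rw [Finset.sum_ite_mem, Finset.inter_eq_right.mpr hsub]
    rw [hrw, add_assoc, ← Finset.sum_add_distrib]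
    apply add_le_add_right
    apply Finset.sum_le_sum
    intro i hi
    have hi1 : 1 ≤ i := (Finset.mem_Icc.mp hi).1
    have hTi := hT i hi
    have hCi := hC i hi
    have hgp := hgpos i hi
    have hAtu : A i * t i * U i = σ * ((g i : ℝ) + b) * C i := by
      rw [hA i hi, ht i hi, hU i hi]
      field_simp
    have hBtu : B i * t i * U i = σ * C i := by
      rw [hB i hi, ht i hi, hU i hi]
      field_simp
    have hcb := hceil j hj i hi
    have hmem : (i ∈ Finset.Icc 1 (j - 1)) ↔ i < j := by
      simp only [Finset.mem_Icc]
      omega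
    by_cases hij : i < j
    · rw [if_pos (hmem.mpr hij), hAtu, hBtu]
      rw [if_pos hij] at hcb
      nlinarith [mul_nonneg (mul_pos hσ hCi).le (sub_nonneg.mpr hcb)]
    · rw [if_neg (fun h => hij (hmem.mp h)), hAtu, add_zero]
      rw [if_neg hij, add_zero] at hcb
      nlinarith [mul_nonneg (mul_pos hσ hCi).le (sub_nonneg.mpr hcb)]
  refine ⟨hg1, hAB, hmain, ?_⟩
  rintro ⟨j, hj, hle⟩
  exact ⟨t j, htjpos j hj, htjle j hj, le_trans (hmain j hj) hle⟩
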